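/- Assume r ≥ 3, n i ≠ −1 for all i, and ∑_{i} n i = −2. Fix an index k and assume that either n k is even, or that at most one index i ≠ k has n i odd. Then the greatest common divisor of the finite family of integers consisting of 2·(n i)·(n j) for all pairs of distinct indices i, j both different from k, together with (n i)·(n i + 1) for all i ≠ k, together with n k + 1, equals ∏_{i ≠ k} N k i. -/

import Mathlib

/-- `N i j`: the gcd (as a nonnegative integer) of the family consisting of `n k` for
`k ∉ {i, j}` together with `n i + 1` and `n j + 1`. -/
def Npair {r : ℕ} (n : Fin r → ℤ) (i j : Fin r) : ℕ :=
  Nat.gcd ((Finset.univ \ {i, j}).gcd fun k => (n k).natAbs)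
    (Nat.gcd (n i + 1).natAbs (n j + 1).natAbs)

/-- `d k`: the gcd (as a nonnegative integer) of the family consisting of `2 * n i * n j` for
all pairs of distinct indices `i, j ≠ k`, together with `n i * (n i + 1)` for all `i ≠ k`,
together with `n k + 1`. -/
def dgcd {r : ℕ} (n : Fin r → ℤ) (k : Fin r) : ℕ :=
  Nat.gcd
    ((((Finset.univ.erase k) ×ˢ (Finset.univ.erase k)).filter fun p => p.1 ≠ p.2).gcd
      fun p => (2 * n p.1 * n p.2).natAbs)
    (Nat.gcd ((Finset.univ.erase k).gcd fun i => (n i * (n i + 1)).natAbs)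
      (n k + 1).natAbs)

private lemma dvd_npair_iff {r : ℕ} (n : Fin r → ℤ) (i j : Fin r) (m : ℕ) :
    m ∣ Npair n i j ↔
      (∀ l, l ≠ i → l ≠ j → (m : ℤ) ∣ n l) ∧ (m : ℤ) ∣ n i + 1 ∧ (m : ℤ) ∣ n j + 1 := by
  unfold Npair
  rw [Nat.dvd_gcd_iff, Nat.dvd_gcd_iff]
  constructor
  · rintro ⟨h1, h2, h3⟩
    refine ⟨fun l hli hlj => ?_, Int.natCast_dvd.mpr h2, Int.natCast_dvd.mpr h3⟩
    exact Int.natCast_dvd.mpr (h1.trans (Finset.gcd_dvd (by simp [hli, hlj])))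
  · rintro ⟨h1, h2, h3⟩
    refine ⟨Finset.dvd_gcd fun l hl => ?_, Int.natCast_dvd.mp h2, Int.natCast_dvd.mp h3⟩
    simp only [Finset.mem_sdiff, Finset.mem_insert, Finset.mem_singleton] at hl
    exact Int.natCast_dvd.mp (h1 l (fun h => hl.2 (Or.inl h)) (fun h => hl.2 (Or.inr h)))

private lemma dvd_dgcd_iff {r : ℕ} (n : Fin r → ℤ) (k : Fin r) (m : ℕ) :
    m ∣ dgcd n k ↔
      (∀ i j : Fin r, i ≠ k → j ≠ k → i ≠ j → (m : ℤ) ∣ 2 * n i * n j) ∧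
      (∀ i : Fin r, i ≠ k → (m : ℤ) ∣ n i * (n i + 1)) ∧ (m : ℤ) ∣ n k + 1 := by
  unfold dgcd
  rw [Nat.dvd_gcd_iff, Nat.dvd_gcd_iff]
  constructor
  · rintro ⟨h1, h2, h3⟩
    refine ⟨fun i j hi hj hij => ?_, fun i hi => ?_, Int.natCast_dvd.mpr h3⟩
    · refine Int.natCast_dvd.mpr (h1.trans (Finset.gcd_dvd (b := (i, j)) ?_))
      simp [Finset.mem_filter, Finset.mem_product, hi, hj, hij]
    · exact Int.natCast_dvd.mpr (h2.trans (Finset.gcd_dvd (by simp [hi])))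
  · rintro ⟨h1, h2, h3⟩
    refine ⟨Finset.dvd_gcd fun p hp => ?_, Finset.dvd_gcd fun i hi => ?_, Int.natCast_dvd.mp h3⟩
    · simp only [Finset.mem_filter, Finset.mem_product, Finset.mem_erase] at hp
      exact Int.natCast_dvd.mp (h1 p.1 p.2 hp.1.1.1 hp.1.2.1 hp.2)
    · exact Int.natCast_dvd.mp (h2 i (Finset.mem_erase.mp hi).1)

private lemma nat_prod_dvd {ι : Type*} {s : Finset ι} {f : ι → ℕ} {m : ℕ}
    (hc : ∀ i ∈ s, ∀ j ∈ s, i ≠ j → Nat.Coprime (f i) (f j))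
    (hd : ∀ i ∈ s, f i ∣ m) : (∏ i ∈ s, f i) ∣ m := by
  classical
  induction s using Finset.induction_on with
  | empty => simp
  | insert _ _ ha ih =>
    rename_i a s'
    rw [Finset.prod_insert ha]
    refine Nat.Coprime.mul_dvd_of_dvd_of_dvd ?_ (hd a (Finset.mem_insert_self a s'))
      (ih (fun i hi j hj hij =>
          hc i (Finset.mem_insert_of_mem hi) j (Finset.mem_insert_of_mem hj) hij)
        (fun i hi => hd i (Finset.mem_insert_of_mem hi)))
    exact Nat.Coprime.prod_right fun j hj =>
      hc a (Finset.mem_insert_self a s') j (Finset.mem_insert_of_mem hj)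
        (fun h => ha (h ▸ hj))

/-- If `r ≥ 3`, no `n i` equals `-1`, `∑ n i = -2`, and either `n k` is even or at most one
index `i ≠ k` has `n i` odd, then `d k = ∏_{i ≠ k} N k i`. -/
theorem dgcd_eq_prod {r : ℕ} (hr : 3 ≤ r) (n : Fin r → ℤ)
    (hn : ∀ i, n i ≠ -1) (hsum : ∑ i, n i = -2) (k : Fin r)
    (hk : Even (n k) ∨ ((Finset.univ.filter fun i => i ≠ k ∧ Odd (n i)).card ≤ 1)) :
    dgcd n k = ∏ i ∈ Finset.univ.erase k, Npair n k i := by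
  -- the Npair's are pairwise coprime
  have hcop : ∀ i ∈ Finset.univ.erase k, ∀ j ∈ Finset.univ.erase k, i ≠ j →
      Nat.Coprime (Npair n k i) (Npair n k j) := by
    intro i hi j hj hij
    rw [Finset.mem_erase] at hi hj
    set g := Nat.gcd (Npair n k i) (Npair n k j) with hg
    have h1 := (dvd_npair_iff n k i g).mp (Nat.gcd_dvd_left _ _)
    have h2 := (dvd_npair_iff n k j g).mp (Nat.gcd_dvd_right _ _)
    have hni : (g : ℤ) ∣ n i := h2.1 i hi.1 hij
    have hone : (g : ℤ) ∣ 1 := by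
      have := dvd_sub h1.2.2 hni; simpa using this
    have : g ∣ 1 := by rwa [Int.natCast_dvd] at hone
    exact Nat.dvd_one.mp this
  -- each Npair divides dgcd
  have hNdvd : ∀ i ∈ Finset.univ.erase k, Npair n k i ∣ dgcd n k := by
    intro i hi
    rw [Finset.mem_erase] at hi
    have hN := (dvd_npair_iff n k i (Npair n k i)).mp dvd_rfl
    rw [dvd_dgcd_iff]
    refine ⟨fun a b ha hb hab => ?_, fun a ha => ?_, hN.2.1⟩
    · rcases eq_or_ne a i with rfl | hai
      · exact Dvd.dvd.mul_left (hN.1 b hb (Ne.symm hab)) _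
      · exact (Dvd.dvd.mul_left (hN.1 a ha hai) 2).mul_right _
    · rcases eq_or_ne a i with rfl | hai
      · exact Dvd.dvd.mul_left hN.2.2 _
      · exact (hN.1 a ha hai).mul_right _
  have hprod_dvd : (∏ i ∈ Finset.univ.erase k, Npair n k i) ∣ dgcd n k :=
    nat_prod_dvd hcop hNdvd
  -- positivity
  have hd3 : ((dgcd n k : ℤ)) ∣ n k + 1 := ((dvd_dgcd_iff n k _).mp dvd_rfl).2.2
  have hnk1 : n k + 1 ≠ 0 := by
    intro h; exact hn k (by linarith)
  have hd0 : dgcd n k ≠ 0 := by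
    intro h; rw [h] at hd3; exact hnk1 (by exact_mod_cast (zero_dvd_iff.mp (by exact_mod_cast hd3)))
  have hN0 : ∀ i ∈ Finset.univ.erase k, Npair n k i ≠ 0 := by
    intro i _ h
    have := ((dvd_npair_iff n k i _).mp dvd_rfl).2.1
    rw [h] at this
    exact hnk1 (by exact_mod_cast (zero_dvd_iff.mp (by exact_mod_cast this)))
  have hP0 : (∏ i ∈ Finset.univ.erase k, Npair n k i) ≠ 0 :=
    Finset.prod_ne_zero_iff.mpr hN0
  -- key claim: every prime power dividing dgcd divides some Npair
  have key : ∀ p e : ℕ, p.Prime → 1 ≤ e → p ^ e ∣ dgcd n k →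
      ∃ i ∈ Finset.univ.erase k, p ^ e ∣ Npair n k i := by
    intro p e pp he hpe
    obtain ⟨H1, H2, H3⟩ := (dvd_dgcd_iff n k (p ^ e)).mp hpe
    have hpp : Prime ((p : ℤ)) := Nat.prime_iff_prime_int.mp pp
    have hPeq : (((p ^ e : ℕ)) : ℤ) = (p : ℤ) ^ e := by push_cast; ring
    have hP1 : ∀ i j : Fin r, i ≠ k → j ≠ k → i ≠ j → (p : ℤ) ^ e ∣ 2 * n i * n j :=
      fun i j hi hj hij => hPeq ▸ H1 i j hi hj hij
    have hP2 : ∀ i : Fin r, i ≠ k → (p : ℤ) ^ e ∣ n i * (n i + 1) :=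
      fun i hi => hPeq ▸ H2 i hi
    have hP3 : (p : ℤ) ^ e ∣ n k + 1 := hPeq ▸ H3
    have hpk : (p : ℤ) ∣ n k + 1 := (dvd_pow_self (p:ℤ) (Nat.one_le_iff_ne_zero.mp he)).trans hP3
    -- existence of a bad index
    have hex : ∃ i, i ≠ k ∧ ¬ (p : ℤ) ∣ n i := by
      by_contra hcon
      push_neg at hcon
      have hdvdsum : (p : ℤ) ∣ ∑ i ∈ Finset.univ.erase k, n i :=
        Finset.dvd_sum fun i hi => hcon i (Finset.mem_erase.mp hi).1
      have hsum' : ∑ i ∈ Finset.univ.erase k, n i = -2 - n k := by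
        have := Finset.add_sum_erase Finset.univ n (Finset.mem_univ k)
        rw [hsum] at this; linarith
      rw [hsum'] at hdvdsum
      have hdone : (p : ℤ) ∣ -1 := by
        have h := dvd_add hdvdsum hpk
        have h2 : (-2 - n k) + (n k + 1) = -1 := by ring
        rwa [h2] at h
      have : (p : ℤ) ∣ 1 := (dvd_neg.mp hdone)
      have hp1 : p ∣ 1 := by exact_mod_cast Int.natCast_dvd.mp this
      exact Nat.Prime.one_lt pp |>.ne' (Nat.dvd_one.mp hp1)
    obtain ⟨i0, hi0k, hi0⟩ := hex
    -- uniqueness of the bad index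
    have huniq : ∀ j, j ≠ k → j ≠ i0 → (p : ℤ) ∣ n j := by
      intro j hjk hji0
      by_contra hj
      rcases eq_or_ne p 2 with rfl | hp2
      · -- p = 2: both n i0 and n j are odd, contradicting hk
        have hnk_odd : ¬ Even (n k) := by
          intro hev
          rw [Int.even_iff] at hev
          have h2 : ((2:ℕ) : ℤ) = 2 := by norm_num
          rw [h2] at hpk
          omega
        have hcard := hk.resolve_left hnk_odd
        rw [Finset.card_le_one] at hcard
        have h2 : ((2:ℕ) : ℤ) = 2 := by norm_num
        rw [h2] at hi0 hj
        have hoi0 : Odd (n i0) := by rw [Int.odd_iff]; omega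
        have hoj : Odd (n j) := by rw [Int.odd_iff]; omega
        have := hcard i0 (by simp [hi0k, hoi0]) j (by simp [hjk, hoj])
        exact hji0 this.symm
      · -- p odd
        have hdvd : (p : ℤ) ∣ 2 * n i0 * n j :=
          (dvd_pow_self (p:ℤ) (Nat.one_le_iff_ne_zero.mp he)).trans
            (hP1 i0 j hi0k hjk (Ne.symm hji0))
        rcases (hpp.dvd_mul).mp hdvd with h | h
        · rcases (hpp.dvd_mul).mp h with h2 | h2
          · have hp2' : p ∣ 2 := by
              have := Int.natCast_dvd.mp h2
              simpa using this
            exact hp2 ((Nat.prime_dvd_prime_iff_eq pp Nat.prime_two).mp hp2')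
          · exact hi0 h2
        · exact hj h
    -- conclude: p ^ e divides Npair n k i0
    refine ⟨i0, Finset.mem_erase.mpr ⟨hi0k, Finset.mem_univ i0⟩, ?_⟩
    rw [dvd_npair_iff]
    have hcopi0 : IsCoprime ((p : ℤ) ^ e) (n i0) :=
      ((hpp.irreducible.coprime_iff_not_dvd).mpr hi0).pow_left
    refine ⟨fun l hlk hli0 => ?_, hPeq ▸ hP3, hPeq ▸ (hcopi0.dvd_of_dvd_mul_left (hP2 i0 hi0k))⟩
    · rw [hPeq]
      rcases eq_or_ne p 2 with rfl | hp2
      · -- use n l * (n l + 1) with n l even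
        have h2 : ((2:ℕ) : ℤ) = 2 := by norm_num
        have h2l : (2 : ℤ) ∣ n l := h2 ▸ huniq l hlk hli0
        have hnot : ¬ ((2:ℕ) : ℤ) ∣ (n l + 1) := by rw [h2]; omega
        have hcop2 : IsCoprime (((2:ℕ) : ℤ) ^ e) (n l + 1) :=
          ((hpp.irreducible.coprime_iff_not_dvd).mpr hnot).pow_left
        exact hcop2.dvd_of_dvd_mul_right (hP2 l hlk)
      · -- use 2 * n i0 * n l with p ∤ 2 * n i0
        have hpnot2 : ¬ (p : ℤ) ∣ 2 := by
          intro h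
          have hp2' : p ∣ 2 := by
            have := Int.natCast_dvd.mp h
            simpa using this
          exact hp2 ((Nat.prime_dvd_prime_iff_eq pp Nat.prime_two).mp hp2')
        have hcop : IsCoprime ((p : ℤ) ^ e) (2 * n i0) :=
          (((hpp.irreducible.coprime_iff_not_dvd).mpr hpnot2).mul_right
            ((hpp.irreducible.coprime_iff_not_dvd).mpr hi0)).pow_left
        exact hcop.dvd_of_dvd_mul_left (hP1 i0 l hi0k hlk (Ne.symm hli0))
  -- conclude divisibility of dgcd into the product
  have hdvd2 : dgcd n k ∣ ∏ i ∈ Finset.univ.erase k, Npair n k i := by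
    rw [← Nat.factorization_le_iff_dvd hd0 hP0]
    intro p
    by_cases pp : p.Prime
    · rcases Nat.eq_zero_or_pos ((dgcd n k).factorization p) with h0 | hpos
      · rw [h0]; exact Nat.zero_le _
      · obtain ⟨i, hi, hdiv⟩ := key p _ pp hpos (Nat.ordProj_dvd _ p)
        exact (Nat.Prime.pow_dvd_iff_le_factorization pp hP0).mp
          (hdiv.trans (Finset.dvd_prod_of_mem _ hi))
    · simp [Nat.factorization_eq_zero_of_not_prime _ pp]
  exact Nat.dvd_antisymm hdvd2 hprod_dvd
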